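/- Let H be a complex Hilbert space and let D, τ be bounded self-adjoint operators on H with τ² = 1 and Dτ + τD = 0. Set g(x) = x/√(1+x²) and h(x) = 1/√(1+x²), and G := g(D) − τ h(D). Then G is a self-adjoint unitary: G* = G and G² = 1. -/

import Mathlib

section aux

variable {A : Type*} [CStarAlgebra A]

lemma conj_cfc (τ D : A) (hD : IsSelfAdjoint D) (hτ : IsSelfAdjoint τ)
    (hτ2 : τ * τ = 1) (hanti : D * τ + τ * D = 0) (f : ℝ → ℝ) (hf : Continuous f) :
    τ * cfc f D * τ = cfc (fun x => f (-x)) D := by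
  have hτDτ : τ * D * τ = -D := by
    have h1 : D * τ = -(τ * D) := by linear_combination (norm := noncomm_ring) hanti
    rw [mul_assoc, h1, mul_neg, ← mul_assoc, hτ2, one_mul]
  let φ : A →⋆ₐ[ℂ] A :=
    { toFun := fun x => τ * x * τ
      map_one' := by simpa using hτ2
      map_mul' := fun x y => by
        have : τ * (x * y) * τ = τ * x * (τ * τ) * y * τ := by rw [hτ2]; noncomm_ring
        simpa [mul_assoc] using this
      map_zero' := by simp
      map_add' := fun x y => by noncomm_ring
      commutes' := fun r => by
        simp only [Algebra.algebraMap_eq_smul_one]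
        rw [mul_smul_comm, smul_mul_assoc, mul_one, hτ2]
      map_star' := fun x => by
        simp [star_mul, hτ.star_eq, mul_assoc] }
  have hφc : Continuous φ := by
    show Continuous fun x => τ * x * τ
    fun_prop
  have hmap := StarAlgHom.map_cfc φ f D (hf.continuousOn) hφc hD
  have hφD : φ D = -D := hτDτ
  calc τ * cfc f D * τ = φ (cfc f D) := rfl
  _ = cfc f (-D) := by rw [hmap, hφD]
  _ = cfc (fun x => f (-x)) D := by
      rw [← cfc_comp_neg f D (hf.continuousOn)]

end aux

theorem stmt_4 {H : Type*} [NormedAddCommGroup H] [InnerProductSpace ℂ H] [CompleteSpace H]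
    (D τ : H →L[ℂ] H) (hD : IsSelfAdjoint D) (hτ : IsSelfAdjoint τ)
    (hτ2 : τ * τ = 1) (hanti : D * τ + τ * D = 0)
    (G : H →L[ℂ] H)
    (hG : G = cfc (fun x : ℝ => x / Real.sqrt (1 + x ^ 2)) D -
      τ * cfc (fun x : ℝ => 1 / Real.sqrt (1 + x ^ 2)) D) :
    star G = G ∧ G ^ 2 = 1 := by
  set g : ℝ → ℝ := fun x => x / Real.sqrt (1 + x ^ 2) with hgdef
  set h : ℝ → ℝ := fun x => 1 / Real.sqrt (1 + x ^ 2) with hhdef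
  have hspos : ∀ x : ℝ, 0 < Real.sqrt (1 + x ^ 2) := fun x =>
    Real.sqrt_pos.mpr (by positivity)
  have hscont : Continuous fun x : ℝ => Real.sqrt (1 + x ^ 2) :=
    Real.continuous_sqrt.comp (by fun_prop)
  have hgc : Continuous g := continuous_id.div hscont fun x => (hspos x).ne'
  have hhc : Continuous h := continuous_const.div hscont fun x => (hspos x).ne'
  set a := cfc g D with ha
  set b := cfc h D with hb
  have hga : IsSelfAdjoint a := cfc_predicate g D
  have hhb : IsSelfAdjoint b := cfc_predicate h D
  -- commutation relations
  have hτaτ : τ * a * τ = -a := by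
    rw [ha, conj_cfc τ D hD hτ hτ2 hanti g hgc, ← cfc_neg g D]
    exact cfc_congr fun x _ => by simp [hgdef, neg_div]
  have hτbτ : τ * b * τ = b := by
    rw [hb, conj_cfc τ D hD hτ hτ2 hanti h hhc]
    exact cfc_congr fun x _ => by simp [hhdef]
  have hτa : τ * a = -(a * τ) := by
    have := congrArg (· * τ) hτaτ
    simpa [mul_assoc, hτ2] using this
  have hτb : τ * b = b * τ := by
    have := congrArg (· * τ) hτbτ
    simpa [mul_assoc, hτ2] using this
  have hab : a * b = b * a := by
    rw [ha, hb, ← cfc_mul g h D hgc.continuousOn hhc.continuousOn,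
      ← cfc_mul h g D hhc.continuousOn hgc.continuousOn]
    exact cfc_congr fun x _ => mul_comm _ _
  have hsq : a * a + b * b = 1 := by
    rw [ha, hb, ← cfc_mul g g D hgc.continuousOn hgc.continuousOn,
      ← cfc_mul h h D hhc.continuousOn hhc.continuousOn,
      ← cfc_add D (fun x => g x * g x) (fun x => h x * h x) ((hgc.mul hgc).continuousOn) ((hhc.mul hhc).continuousOn)]
    rw [show (fun x => g x * g x + h x * h x) = fun _ : ℝ => (1 : ℝ) from ?_, cfc_const_one ℝ D]
    funext x
    have hs : Real.sqrt (1 + x ^ 2) * Real.sqrt (1 + x ^ 2) = 1 + x ^ 2 :=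
      Real.mul_self_sqrt (by positivity)
    simp only [hgdef, hhdef]
    rw [div_mul_div_comm, div_mul_div_comm, ← add_div, hs, one_mul,
      div_eq_one_iff_eq (by positivity)]
    ring
  constructor
  · rw [hG]
    simp only [star_sub, star_mul, hga.star_eq, hhb.star_eq, hτ.star_eq]
    rw [← hτb]
  · rw [hG, sq]
    have step : (a - τ * b) * (a - τ * b)
        = a * a - (a * τ) * b - τ * (b * a) + (τ * b) * (τ * b) := by noncomm_ring
    rw [step, hτb, ← hab]
    have h4 : b * τ * (b * τ) = b * b := by
      calc b * τ * (b * τ) = b * (τ * b) * τ := by noncomm_ring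
      _ = b * (b * τ) * τ := by rw [hτb]
      _ = b * b * (τ * τ) := by noncomm_ring
      _ = b * b := by rw [hτ2, mul_one]
    rw [h4]
    have h2 : a * τ = -(τ * a) := by rw [hτa, neg_neg]
    rw [h2]
    calc a * a - -(τ * a) * b - τ * (a * b) + b * b = a * a + b * b + (τ * (a*b) - τ * (a*b)) := by noncomm_ring
    _ = 1 := by rw [hsq]; abel
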